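/- Let α, β : ℤ → ℂ with α nowhere zero, set γ = 1 − αβ, and suppose φ has a formal expansion φ(z) = Σ_{j=−1}^∞ φ_j^∞ z^{−j} with leading coefficient φ_{−1}^∞ ≠ 0 satisfying the Riccati equation α φ φ⁻ − φ⁻ + zφ = zβ coefficientwise. Then φ_{−1}^∞ = −1/α⁺, φ₀^∞ = (α⁺⁺/(α⁺)²)γ⁺, and φ_{j+1}^∞ = −(α⁺⁺/α⁺) φ_j^∞ + α⁺⁺ Σ_{ℓ=0}^{j} φ_{j−ℓ}^∞ (φ_ℓ^∞)⁺ for j ≥ 0. -/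

import Mathlib

/-- Coefficients of the formal expansion `φ(z) = Σ_{j≥−1} φ_j^∞ z^{−j}` of a solution of
the Riccati equation `α φ φ⁻ − φ⁻ + zφ = zβ` around `1/z = 0`, with a nonvanishing
leading `z¹` term.  Here `ψ j` denotes `φ_{j−1}^∞`, so `φ(z) = Σ_{j≥0} ψ_j z^{1−j}`.
The Riccati equation coefficientwise reads: at `z²`, `α ψ₀ ψ₀⁻ + ψ₀ = 0`; at `z¹`,
`α(ψ₀ψ₁⁻ + ψ₁ψ₀⁻) − ψ₀⁻ + ψ₁ = β`; at `z^{2−j}` (`j ≥ 2`),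
`α Σ_{ℓ=0}^{j} ψ_ℓ ψ_{j−ℓ}⁻ − ψ_{j−1}⁻ + ψ_j = 0`.  Then `φ_{−1}^∞ = −1/α⁺`,
`φ₀^∞ = (α⁺⁺/(α⁺)²)γ⁺`, and
`φ_{j+1}^∞ = −(α⁺⁺/α⁺) φ_j^∞ + α⁺⁺ Σ_{ℓ=0}^{j} φ_{j−ℓ}^∞ (φ_ℓ^∞)⁺` for `j ≥ 0`,
where `γ = 1 − αβ`. -/
theorem stmt6 (α β : ℤ → ℂ) (hα : ∀ n : ℤ, α n ≠ 0)
    (ψ : ℕ → ℤ → ℂ) (hlead : ∀ n : ℤ, ψ 0 n ≠ 0)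
    (h2 : ∀ n : ℤ, α n * ψ 0 n * ψ 0 (n - 1) + ψ 0 n = 0)
    (h1 : ∀ n : ℤ,
      α n * (ψ 0 n * ψ 1 (n - 1) + ψ 1 n * ψ 0 (n - 1)) - ψ 0 (n - 1) + ψ 1 n = β n)
    (hric : ∀ j : ℕ, 2 ≤ j → ∀ n : ℤ,
      α n * (∑ ℓ ∈ Finset.range (j + 1), ψ ℓ n * ψ (j - ℓ) (n - 1))
        - ψ (j - 1) (n - 1) + ψ j n = 0) :
    (∀ n : ℤ, ψ 0 n = -1 / α (n + 1)) ∧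
    (∀ n : ℤ, ψ 1 n = α (n + 2) / (α (n + 1)) ^ 2 * (1 - α (n + 1) * β (n + 1))) ∧
    (∀ (j : ℕ) (n : ℤ),
      ψ (j + 2) n = -(α (n + 2) / α (n + 1)) * ψ (j + 1) n
        + α (n + 2) * ∑ ℓ ∈ Finset.range (j + 1), ψ (j + 1 - ℓ) n * ψ (ℓ + 1) (n + 1)) := by
  have hψ0 : ∀ n : ℤ, ψ 0 n = -1 / α (n + 1) := by
    intro n
    have h := h2 (n + 1)
    rw [show (n:ℤ) + 1 - 1 = n by ring] at h
    have h' : ψ 0 (n + 1) * (α (n + 1) * ψ 0 n + 1) = 0 := by linear_combination h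
    rcases mul_eq_zero.mp h' with h'' | h''
    · exact absurd h'' (hlead _)
    · have ha := hα (n + 1)
      field_simp
      linear_combination h''
  have hψ1 : ∀ n : ℤ, ψ 1 n = α (n + 2) / (α (n + 1)) ^ 2 * (1 - α (n + 1) * β (n + 1)) := by
    intro n
    have h := h1 (n + 1)
    rw [show (n:ℤ) + 1 - 1 = n by ring, hψ0 (n + 1), hψ0 n,
      show (n:ℤ) + 1 + 1 = n + 2 by ring] at h
    have ha1 := hα (n + 1)
    have ha2 := hα (n + 2)
    field_simp at h
    have key : ψ 1 n * α (n + 1) ^ 2 * α (n + 1)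
        = (α (n + 2) * (1 - α (n + 1) * β (n + 1))) * α (n + 1) := by
      linear_combination -α (n + 1) * h
    have key2 := mul_right_cancel₀ ha1 key
    field_simp
    linear_combination key2
  refine ⟨hψ0, hψ1, ?_⟩
  intro j n
  have h := hric (j + 2) (by omega) (n + 1)
  rw [show (n:ℤ) + 1 - 1 = n by ring] at h
  have hsum : ∑ ℓ ∈ Finset.range (j + 2 + 1), ψ ℓ (n + 1) * ψ (j + 2 - ℓ) n
      = ψ 0 (n + 1) * ψ (j + 2) n
        + (∑ ℓ ∈ Finset.range (j + 1), ψ (ℓ + 1) (n + 1) * ψ (j + 1 - ℓ) n)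
        + ψ (j + 2) (n + 1) * ψ 0 n := by
    rw [Finset.sum_range_succ, Finset.sum_range_succ']
    rw [Finset.sum_congr rfl (fun ℓ _ => by
      rw [show j + 2 - (ℓ + 1) = j + 1 - ℓ from by omega] :
        ∀ ℓ ∈ Finset.range (j + 1),
          ψ (ℓ + 1) (n + 1) * ψ (j + 2 - (ℓ + 1)) n
            = ψ (ℓ + 1) (n + 1) * ψ (j + 1 - ℓ) n)]
    rw [show j + 2 - (j + 2) = 0 from by omega, show j + 2 - 0 = j + 2 from rfl]
    ring
  rw [hsum, hψ0 (n + 1), hψ0 n, show (n:ℤ) + 1 + 1 = n + 2 by ring] at h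
  have ha1 := hα (n + 1)
  have ha2 := hα (n + 2)
  have hcomm : ∑ ℓ ∈ Finset.range (j + 1), ψ (j + 1 - ℓ) n * ψ (ℓ + 1) (n + 1)
      = ∑ ℓ ∈ Finset.range (j + 1), ψ (ℓ + 1) (n + 1) * ψ (j + 1 - ℓ) n := by
    exact Finset.sum_congr rfl fun ℓ _ => mul_comm _ _
  rw [hcomm]
  field_simp at h
  rw [show j + 2 - 1 = j + 1 from by omega] at h
  have key : ψ (j + 2) n * α (n + 1) * α (n + 1)
      = (-(α (n + 2)) * ψ (j + 1) n
          + α (n + 1) * α (n + 2)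
            * ∑ ℓ ∈ Finset.range (j + 1), ψ (ℓ + 1) (n + 1) * ψ (j + 1 - ℓ) n) * α (n + 1) := by
    linear_combination -α (n + 1) * h
  have key2 := mul_right_cancel₀ ha1 key
  field_simp
  linear_combination key2
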